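/- For every subexponential function g : ℕ → ℕ there exists an increasing, submultiplicative function f : ℕ → ℕ with g ⪯ f (i.e., g(n) ≤ f(Cn) for some C > 0 and all n) such that f is not equivalent to the growth function of any finitely generated algebra; in particular, there is no growth function γ of a finitely generated algebra and constants C, D with γ(n) ≤ f(Cn) ≤ γ(Dn) for all n. -/

import Mathlib

namespace Stmt17

/-! ### Generic numeric helpers -/

lemma div_add_le (x y t : ℕ) (ht : 0 < t) : (x+y)/t ≤ x/t + y/t + 1 := by
  have h1 : x < t*(x/t) + t := by have := Nat.mod_lt x ht; have := Nat.div_add_mod x t; omega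
  have h2 : y < t*(y/t) + t := by have := Nat.mod_lt y ht; have := Nat.div_add_mod y t; omega
  have : (x+y)/t < x/t + y/t + 2 := by
    rw [Nat.div_lt_iff_lt_mul ht]; nlinarith
  omega

lemma sq_lt_two_pow (q : ℕ) (hq : 5 ≤ q) : q*q < 2^q := by
  induction q with
  | zero => omega
  | succ n ih =>
    rcases Nat.lt_or_ge n 5 with h | h
    · have hn4 : n = 4 := by omega
      subst hn4; norm_num
    · have h1 : n*n < 2^n := ih (by omega)
      have h2 : (n+1)*(n+1) ≤ 2*(n*n) := by nlinarith
      calc (n+1)*(n+1) ≤ 2*(n*n) := h2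
        _ < 2*2^n := by omega
        _ = 2^(n+1) := by ring

lemma exists_big (c T : ℕ) (hT : 1 ≤ T) : ∃ N, ∀ a, N ≤ a → c*a + c < 2^(a/T) := by
  refine ⟨T*(max 5 (c*T + c + 2)), fun a ha => ?_⟩
  have hq : max 5 (c*T + c + 2) ≤ a/T := by
    rw [Nat.le_div_iff_mul_le hT]
    calc (max 5 (c*T + c + 2)) * T = T * (max 5 (c*T + c + 2)) := by ring
      _ ≤ a := ha
  have hq5 : 5 ≤ a/T := le_trans (le_max_left _ _) hq
  have hqc : c*T + c + 2 ≤ a/T := le_trans (le_max_right _ _) hq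
  have haT : a < T*(a/T) + T := by
    have := Nat.mod_lt a hT; have := Nat.div_add_mod a T; omega
  have h1 : c*a + c ≤ (a/T)*(a/T) := by
    have h2 : c*a + c ≤ c*(T*(a/T)+T) + c := by
      have : a ≤ T*(a/T) + T := le_of_lt haT
      exact Nat.add_le_add_right (Nat.mul_le_mul_left c this) c
    calc c*a + c ≤ c*(T*(a/T)+T) + c := h2
      _ = c*T*(a/T) + (c*T + c) := by ring
      _ ≤ c*T*(a/T) + (a/T) := by omega
      _ ≤ (a/T)*(a/T) := by nlinarith
  calc c*a + c ≤ (a/T)*(a/T) := h1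
    _ < 2^(a/T) := sq_lt_two_pow _ hq5

/-! ### The monotone majorant of `g` and subexponential bounds -/

variable (g : ℕ → ℕ)

def gbar (n : ℕ) : ℕ := (Finset.range (n+1)).sup g

lemma le_gbar (n : ℕ) : g n ≤ gbar g n :=
  Finset.le_sup (Finset.self_mem_range_succ n)

lemma le_gbar_of_le {m n : ℕ} (h : m ≤ n) : g m ≤ gbar g n :=
  Finset.le_sup (Finset.mem_range_succ_iff.mpr h)

lemma gbar_mono : Monotone (gbar g) := by
  intro m n h
  exact Finset.sup_mono (by intro x hx; simp only [Finset.mem_range] at *; omega)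

def Subexp : Prop := ∀ T : ℕ, 1 ≤ T → ∃ N, ∀ n, N ≤ n → gbar g n ≤ 2 ^ (n / T)

lemma subexp_of_tendsto
    (hg : Filter.Tendsto (fun n : ℕ => Real.logb 2 (g n) / (n : ℝ))
      Filter.atTop (nhds 0)) : Subexp g := by
  intro T hT
  have hT2 : (0:ℝ) < 1/(2*T) := by positivity
  have hev : ∀ᶠ n : ℕ in Filter.atTop, Real.logb 2 (g n) / (n:ℝ) < 1/(2*T) :=
    hg.eventually (gt_mem_nhds hT2)
  obtain ⟨N₁, hN₁⟩ := Filter.eventually_atTop.1 hev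
  have hgN₂ : ∀ n, max N₁ (2*T) ≤ n → g n ≤ 2^(n/T) := by
    intro n hn
    have hnN₁ : N₁ ≤ n := le_trans (le_max_left _ _) hn
    have hn2T : 2*T ≤ n := le_trans (le_max_right _ _) hn
    have hnpos : 0 < n := by omega
    rcases Nat.eq_zero_or_pos (g n) with h0 | hpos
    · simp only [h0]
      exact Nat.zero_le _
    · have h1 : Real.logb 2 (g n) / (n:ℝ) < 1/(2*T) := hN₁ n hnN₁
      have hnR : (0:ℝ) < (n:ℝ) := by exact_mod_cast hnpos
      have h2 : Real.logb 2 (g n) < (n:ℝ)/(2*T) := by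
        rw [div_lt_iff₀ hnR] at h1
        calc Real.logb 2 (g n) < 1/(2*T) * n := h1
          _ = (n:ℝ)/(2*T) := by ring
      have hlt : n < 2*T*(n/(2*T)) + 2*T := by
        have := Nat.mod_lt n (by omega : 0 < 2*T)
        have := Nat.div_add_mod n (2*T); omega
      have hltR : (n:ℝ) < 2*T*((n/(2*T) : ℕ):ℝ) + 2*T := by exact_mod_cast hlt
      have hcast : (n:ℝ)/(2*T) < (((n/(2*T):ℕ)):ℝ) + 1 := by
        rw [div_lt_iff₀ (by positivity)]
        nlinarith
      have h3 : Real.logb 2 (g n) < (((n/(2*T):ℕ)):ℝ)+1 := lt_trans h2 hcast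
      have hgpos : (0:ℝ) < (g n : ℝ) := by exact_mod_cast hpos
      have h4 : (g n : ℝ) < 2 ^ ((((n/(2*T):ℕ)):ℝ)+1) := by
        rw [← Real.logb_lt_iff_lt_rpow (by norm_num) hgpos]
        exact h3
      have h5 : (g n : ℝ) < ((2^(n/(2*T)+1) : ℕ) : ℝ) := by
        have he : ((2:ℝ) ^ ((((n/(2*T):ℕ)):ℝ)+1)) = ((2^(n/(2*T)+1):ℕ):ℝ) := by
          rw [show ((((n/(2*T):ℕ)):ℝ)+1) = (((n/(2*T)+1 : ℕ)):ℝ) by push_cast; ring,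
            Real.rpow_natCast]
          push_cast; ring
        rwa [he] at h4
      have h6 : g n < 2^(n/(2*T)+1) := by exact_mod_cast h5
      have h7 : n/(2*T) + 1 ≤ n/T := by
        have h8 : 2*(n/(2*T)) ≤ n/T := by
          rw [Nat.le_div_iff_mul_le (by omega : 0 < T)]
          have h9 : (n/(2*T))*(2*T) ≤ n := Nat.div_mul_le_self n (2*T)
          nlinarith
        have h10 : 1 ≤ n/(2*T) := by
          rw [Nat.le_div_iff_mul_le (by omega : 0 < 2*T)]; omega
        omega
      calc g n ≤ 2^(n/(2*T)+1) := le_of_lt h6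
        _ ≤ 2^(n/T) := Nat.pow_le_pow_right (by norm_num) h7
  set N₂ := max N₁ (2*T) with hN₂def
  refine ⟨max N₂ (T*(gbar g N₂ + 1)), fun n hn => ?_⟩
  have hnN₂ : N₂ ≤ n := le_trans (le_max_left _ _) hn
  have hnT : T*(gbar g N₂ + 1) ≤ n := le_trans (le_max_right _ _) hn
  have h1 : gbar g N₂ + 1 ≤ n/T := by
    rw [Nat.le_div_iff_mul_le (by omega : 0 < T)]
    calc (gbar g N₂ + 1) * T = T*(gbar g N₂+1) := by ring
      _ ≤ n := hnT
  have hbig : gbar g N₂ < 2^(n/T) := by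
    have h2 : gbar g N₂ < 2^(gbar g N₂ + 1) := by
      have := Nat.lt_two_pow_self (n := gbar g N₂)
      have := Nat.pow_le_pow_right (by norm_num : 1 ≤ 2) (Nat.le_succ (gbar g N₂))
      omega
    exact lt_of_lt_of_le h2 (Nat.pow_le_pow_right (by norm_num) h1)
  apply Finset.sup_le
  intro m hm
  have hmn : m ≤ n := by simpa [Nat.lt_succ_iff] using hm
  rcases le_or_gt m N₂ with h | h
  · exact le_of_lt (lt_of_le_of_lt (le_gbar_of_le g h) hbig)
  · calc g m ≤ 2^(m/T) := hgN₂ m (le_of_lt h)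
      _ ≤ 2^(n/T) := Nat.pow_le_pow_right (by norm_num) (Nat.div_le_div_right hmn)



/-! ### The construction -/

def t : ℕ → ℕ
  | 0 => 2
  | (k+1) => 8*(k+2)*(t k)

lemma t_pos (k : ℕ) : 0 < t k := by
  induction k with
  | zero => norm_num [t]
  | succ n ih => simp only [t]; positivity

lemma t_one_le (k : ℕ) : 1 ≤ t k := t_pos k

lemma t_succ (k : ℕ) : t (k+1) = 8*(k+2)*(t k) := rfl

lemma t_le_succ (k : ℕ) : t k ≤ t (k+1) := by
  rw [t_succ]
  have := t_pos k
  nlinarith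

lemma t_mono : Monotone t := monotone_nat_of_le_succ t_le_succ

lemma four_t_le_succ (k : ℕ) : 4*(t k) ≤ t (k+1) := by
  rw [t_succ]; have := t_pos k; nlinarith

variable (hs : Subexp g)

noncomputable section

/-- threshold beyond which `gbar g n ≤ 2^(n/T)` -/
def Nthr (T : ℕ) (hT : 1 ≤ T) : ℕ := (hs T hT).choose

lemma Nthr_spec (T : ℕ) (hT : 1 ≤ T) :
    ∀ n, Nthr g hs T hT ≤ n → gbar g n ≤ 2^(n/T) := (hs T hT).choose_spec

lemma pos1 (k : ℕ) : 1 ≤ 2*(k+2)*(t k) := by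
  nlinarith [t_pos k]

lemma pos2 (k : ℕ) : 1 ≤ 2*(t (k+1)) := by
  nlinarith [t_pos (k+1)]

lemma pos0 : 1 ≤ 2*(t 0) := by norm_num [t]

/-- one step of the recursion: given `(a k, U k)`, produce `(a (k+1), U (k+1))`. -/
def step (k : ℕ) (p : ℕ × ℕ) : ℕ × ℕ :=
  let A1 := 2*(k+1)*p.1 + 8*(t k) + 8
  let A2 := Nthr g hs (2*(k+2)*(t k)) (pos1 k)
  let A3 := 2*(t k)*(gbar g (Nthr g hs (2*(t (k+1))) (pos2 k)) + 1)
  let A4 := 4*(t (k+1))*(p.2+1)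
  let A5 := (exists_big ((2*k+4)^(3*k+12)+2) (t (k+1)) (t_one_le (k+1))).choose
  let a' := max (max A1 A2) (max A3 (max A4 A5))
  (a', p.2 * 2^((a' - (k+1)*p.1)/(t k)))

def S : ℕ → ℕ × ℕ
  | 0 => (1, gbar g (max 1 (Nthr g hs (2*(t 0)) pos0)) + 4)
  | (k+1) => step g hs k (S k)

def a (k : ℕ) : ℕ := (S g hs k).1
def U (k : ℕ) : ℕ := (S g hs k).2
def b (k : ℕ) : ℕ := (k+1)*(a g hs k)
def h (k n : ℕ) : ℕ := (U g hs k) * 2^((n - b g hs k)/(t k))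
def m (n : ℕ) : ℕ := sInf (Set.range (fun k => h g hs k n))
def f (n : ℕ) : ℕ := n + m g hs n


/-! ### extraction lemmas for the recursion -/

lemma a_succ_eq (k : ℕ) : a g hs (k+1) =
    max (max (2*(k+1)*(a g hs k) + 8*(t k) + 8) (Nthr g hs (2*(k+2)*(t k)) (pos1 k)))
        (max (2*(t k)*(gbar g (Nthr g hs (2*(t (k+1))) (pos2 k)) + 1))
             (max (4*(t (k+1))*((U g hs k)+1))
                  ((exists_big ((2*k+4)^(3*k+12)+2) (t (k+1)) (t_one_le (k+1))).choose))) := rfl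

lemma U_succ_eq (k : ℕ) :
    U g hs (k+1) = (U g hs k) * 2^((a g hs (k+1) - b g hs k)/(t k)) := rfl

lemma a_zero : a g hs 0 = 1 := rfl

lemma aA1 (k : ℕ) : 2*(k+1)*(a g hs k) + 8*(t k) + 8 ≤ a g hs (k+1) := by
  rw [a_succ_eq]; exact le_trans (le_max_left _ _) (le_max_left _ _)

lemma aA2 (k : ℕ) : Nthr g hs (2*(k+2)*(t k)) (pos1 k) ≤ a g hs (k+1) := by
  rw [a_succ_eq]; exact le_trans (le_max_right _ _) (le_max_left _ _)

lemma aA3 (k : ℕ) :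
    2*(t k)*(gbar g (Nthr g hs (2*(t (k+1))) (pos2 k)) + 1) ≤ a g hs (k+1) := by
  rw [a_succ_eq]; exact le_trans (le_max_left _ _) (le_max_right _ _)

lemma aA4 (k : ℕ) : 4*(t (k+1))*((U g hs k)+1) ≤ a g hs (k+1) := by
  rw [a_succ_eq]
  exact le_trans (le_trans (le_max_left _ _) (le_max_right _ _)) (le_max_right _ _)

lemma aA5 (k : ℕ) :
    ((2*k+4)^(3*k+12)+2)*(a g hs (k+1)) + ((2*k+4)^(3*k+12)+2)
      < 2^((a g hs (k+1))/(t (k+1))) := by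
  have hc := (exists_big ((2*k+4)^(3*k+12)+2) (t (k+1)) (t_one_le (k+1))).choose_spec
  apply hc
  rw [a_succ_eq]
  exact le_trans (le_trans (le_max_right _ _) (le_max_right _ _)) (le_max_right _ _)

/-! ### basic facts -/

lemma a_pos (k : ℕ) : 1 ≤ a g hs k := by
  cases k with
  | zero => rw [a_zero]
  | succ n => have := aA1 g hs n; omega

lemma a_le_b (k : ℕ) : a g hs k ≤ b g hs k := by
  unfold b; nlinarith [a_pos g hs k]

lemma b_pos (k : ℕ) : 1 ≤ b g hs k := le_trans (a_pos g hs k) (a_le_b g hs k)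

lemma two_b_le_a_succ (k : ℕ) : 2*(b g hs k) ≤ a g hs (k+1) := by
  have h := aA1 g hs k; unfold b; nlinarith

lemma a_le_a_succ (k : ℕ) : a g hs k ≤ a g hs (k+1) := by
  have h1 := two_b_le_a_succ g hs k
  have h2 := a_le_b g hs k
  omega

lemma a_mono : Monotone (a g hs) := monotone_nat_of_le_succ (a_le_a_succ g hs)

lemma b_le_b_succ (k : ℕ) : b g hs k ≤ b g hs (k+1) := by
  unfold b
  have := a_le_a_succ g hs k
  nlinarith

lemma b_mono : Monotone (b g hs) := monotone_nat_of_le_succ (b_le_b_succ g hs)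

lemma b_le_a_succ (k : ℕ) : b g hs k ≤ a g hs (k+1) := by
  have := two_b_le_a_succ g hs k; omega

/-! ### facts about `h` and `m` -/

lemma h_mono (k : ℕ) : Monotone (fun n => h g hs k n) := by
  intro x y hxy
  unfold h
  apply Nat.mul_le_mul_left
  apply Nat.pow_le_pow_right (by norm_num)
  exact Nat.div_le_div_right (Nat.sub_le_sub_right hxy _)

lemma U_le_h (k n : ℕ) : U g hs k ≤ h g hs k n := by
  unfold h
  nlinarith [Nat.one_le_two_pow (n := (n - b g hs k)/(t k))]

lemma h_flat (k n : ℕ) (hn : n ≤ b g hs k) : h g hs k n = U g hs k := by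
  unfold h
  rw [Nat.sub_eq_zero_of_le hn]
  simp

lemma m_le (k n : ℕ) : m g hs n ≤ h g hs k n := Nat.sInf_le ⟨k, rfl⟩

lemma m_attained (n : ℕ) : ∃ k, h g hs k n = m g hs n :=
  Nat.sInf_mem (Set.range_nonempty (fun k => h g hs k n))

lemma m_mono : Monotone (m g hs) := by
  intro x y hxy
  obtain ⟨k, hk⟩ := m_attained g hs y
  rw [← hk]
  exact le_trans (m_le g hs k x) (h_mono g hs k hxy)

lemma le_m (n c : ℕ) (hc : ∀ k, c ≤ h g hs k n) : c ≤ m g hs n := by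
  obtain ⟨k, hk⟩ := m_attained g hs n
  rw [← hk]; exact hc k

/-! ### the invariants, by induction -/

lemma U_big (k : ℕ) : 2^((b g hs k)/(t k) + 2) ≤ U g hs k := by
  induction k with
  | zero =>
    show 2^((1*(1:ℕ))/(t 0) + 2) ≤ gbar g (max 1 (Nthr g hs (2*(t 0)) pos0)) + 4
    norm_num [t]
  | succ k ih =>
    rw [U_succ_eq]
    set a' := a g hs (k+1) with ha'
    have h2b : 2*(b g hs k) ≤ a' := two_b_le_a_succ g hs k
    have hb2 : b g hs k ≤ a'/2 := by omega
    have hsub : a'/2 ≤ a' - b g hs k := by omega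
    have hUk4 : 4 ≤ U g hs k := by
      calc (4:ℕ) = 2^2 := by norm_num
        _ ≤ 2^((b g hs k)/(t k) + 2) := Nat.pow_le_pow_right (by norm_num) (Nat.le_add_left 2 _)
        _ ≤ U g hs k := ih
    have hexp : (b g hs (k+1))/(t (k+1)) ≤ (a' - b g hs k)/(t k) := by
      have e1 : (b g hs (k+1))/(t (k+1)) = a'/(8*(t k)) := by
        unfold b
        rw [t_succ]
        rw [show (k+1+1)*a' = (k+2)*a' by ring, show 8*(k+2)*(t k) = (k+2)*(8*(t k)) by ring]
        exact Nat.mul_div_mul_left a' (8*(t k)) (by omega)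
      rw [e1]
      calc a'/(8*(t k)) ≤ a'/(2*(t k)) :=
            Nat.div_le_div_left (by nlinarith [t_pos k]) (by nlinarith [t_pos k])
        _ = a'/2/(t k) := by rw [Nat.div_div_eq_div_mul]
        _ ≤ (a' - b g hs k)/(t k) := Nat.div_le_div_right hsub
    calc 2^((b g hs (k+1))/(t (k+1)) + 2)
        = 4 * 2^((b g hs (k+1))/(t (k+1))) := by rw [pow_add]; ring
      _ ≤ (U g hs k) * 2^((a' - b g hs k)/(t k)) :=
          Nat.mul_le_mul hUk4 (Nat.pow_le_pow_right (by norm_num) hexp)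

lemma U_four (k : ℕ) : 4 ≤ U g hs k := by
  calc (4:ℕ) = 2^2 := by norm_num
    _ ≤ 2^((b g hs k)/(t k) + 2) := Nat.pow_le_pow_right (by norm_num) (Nat.le_add_left 2 _)
    _ ≤ U g hs k := U_big g hs k

lemma U_le_succ (k : ℕ) : U g hs k ≤ U g hs (k+1) := by
  rw [U_succ_eq]
  nlinarith [Nat.one_le_two_pow (n := (a g hs (k+1) - b g hs k)/(t k)), U_four g hs k]

lemma U_mono : Monotone (U g hs) := monotone_nat_of_le_succ (U_le_succ g hs)

lemma posA (k : ℕ) : 1 ≤ 2*(t k) := by nlinarith [t_pos k]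

/-- the domination threshold for piece `k` -/
noncomputable def N1 (k : ℕ) : ℕ := Nthr g hs (2*(t k)) (posA k)

lemma N1_spec (k : ℕ) : ∀ n, N1 g hs k ≤ n → gbar g n ≤ 2^(n/(2*(t k))) :=
  Nthr_spec g hs (2*(t k)) (posA k)

lemma U_dom (k : ℕ) : gbar g (max (b g hs k) (N1 g hs k)) ≤ U g hs k := by
  cases k with
  | zero =>
    show gbar g (max (b g hs 0) (N1 g hs 0)) ≤ gbar g (max 1 (Nthr g hs (2*(t 0)) pos0)) + 4
    have e1 : b g hs 0 = 1 := by unfold b; rw [a_zero]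
    have e2 : N1 g hs 0 = Nthr g hs (2*(t 0)) pos0 := rfl
    rw [e1, e2]
    exact le_trans (le_refl _) (Nat.le_add_right _ 4)
  | succ k =>
    have hUlb : 2^((a g hs (k+1) - b g hs k)/(t k)) ≤ U g hs (k+1) := by
      rw [U_succ_eq]
      nlinarith [U_four g hs k, Nat.one_le_two_pow (n := (a g hs (k+1) - b g hs k)/(t k))]
    have h2b : 2*(b g hs k) ≤ a g hs (k+1) := two_b_le_a_succ g hs k
    have hhalf : (a g hs (k+1))/(2*(t k)) ≤ (a g hs (k+1) - b g hs k)/(t k) := by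
      calc (a g hs (k+1))/(2*(t k)) = (a g hs (k+1))/2/(t k) := by
            rw [Nat.div_div_eq_div_mul]
        _ ≤ (a g hs (k+1) - b g hs k)/(t k) := Nat.div_le_div_right (by omega)
    rcases max_cases (b g hs (k+1)) (N1 g hs (k+1)) with ⟨he, _⟩ | ⟨he, _⟩ <;> rw [he]
    · -- gbar (b (k+1)) ≤ U (k+1)
      have hb : b g hs (k+1) = (k+2)*(a g hs (k+1)) := by unfold b; ring
      have hNa : Nthr g hs (2*(k+2)*(t k)) (pos1 k) ≤ (k+2)*(a g hs (k+1)) := by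
        calc Nthr g hs (2*(k+2)*(t k)) (pos1 k) ≤ a g hs (k+1) := aA2 g hs k
          _ ≤ (k+2)*(a g hs (k+1)) := Nat.le_mul_of_pos_left _ (by omega)
      have hgb : gbar g ((k+2)*(a g hs (k+1))) ≤ 2^(((k+2)*(a g hs (k+1)))/(2*(k+2)*(t k))) :=
        Nthr_spec g hs (2*(k+2)*(t k)) (pos1 k) _ hNa
      have hdiv : ((k+2)*(a g hs (k+1)))/(2*(k+2)*(t k)) = (a g hs (k+1))/(2*(t k)) := by
        rw [show 2*(k+2)*(t k) = (k+2)*(2*(t k)) by ring]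
        exact Nat.mul_div_mul_left _ _ (by omega)
      rw [hb]
      calc gbar g ((k+2)*(a g hs (k+1))) ≤ 2^(((k+2)*(a g hs (k+1)))/(2*(k+2)*(t k))) := hgb
        _ = 2^((a g hs (k+1))/(2*(t k))) := by rw [hdiv]
        _ ≤ 2^((a g hs (k+1) - b g hs k)/(t k)) := Nat.pow_le_pow_right (by norm_num) hhalf
        _ ≤ U g hs (k+1) := hUlb
    · -- gbar (N1 (k+1)) ≤ U (k+1)
      have hc3 : 2*(t k)*(gbar g (N1 g hs (k+1)) + 1) ≤ a g hs (k+1) := aA3 g hs k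
      have hq : gbar g (N1 g hs (k+1)) + 1 ≤ (a g hs (k+1))/(2*(t k)) := by
        rw [Nat.le_div_iff_mul_le (by nlinarith [t_pos k] : 0 < 2*(t k))]
        calc (gbar g (N1 g hs (k+1)) + 1)*(2*(t k)) = 2*(t k)*(gbar g (N1 g hs (k+1)) + 1) := by
              ring
          _ ≤ a g hs (k+1) := hc3
      apply le_of_lt
      calc gbar g (N1 g hs (k+1)) < 2^(gbar g (N1 g hs (k+1)) + 1) := by
            have := Nat.lt_two_pow_self (n := gbar g (N1 g hs (k+1)))
            have h2 := Nat.pow_le_pow_right (by norm_num : 1 ≤ 2)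
              (Nat.le_succ (gbar g (N1 g hs (k+1))))
            omega
        _ ≤ 2^((a g hs (k+1))/(2*(t k))) := Nat.pow_le_pow_right (by norm_num) hq
        _ ≤ 2^((a g hs (k+1) - b g hs k)/(t k)) := Nat.pow_le_pow_right (by norm_num) hhalf
        _ ≤ U g hs (k+1) := hUlb

lemma piece_dom (k n : ℕ) : gbar g n ≤ h g hs k n := by
  rcases le_or_gt n (max (b g hs k) (N1 g hs k)) with hc | hc
  · calc gbar g n ≤ gbar g (max (b g hs k) (N1 g hs k)) := gbar_mono g hc
      _ ≤ U g hs k := U_dom g hs k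
      _ ≤ h g hs k n := U_le_h g hs k n
  · have hb : b g hs k ≤ n := le_of_lt (lt_of_le_of_lt (le_max_left _ _) hc)
    have hN : N1 g hs k ≤ n := le_of_lt (lt_of_le_of_lt (le_max_right _ _) hc)
    have h1 : gbar g n ≤ 2^(n/(2*(t k))) := N1_spec g hs k n hN
    have h2 : n/(2*(t k)) ≤ (n - b g hs k)/(t k) + ((b g hs k)/(t k) + 1) := by
      have e1 : n/(2*(t k)) ≤ n/(t k) :=
        Nat.div_le_div_left (by nlinarith [t_pos k]) (t_pos k)
      have e2 : n/(t k) ≤ (n - b g hs k)/(t k) + (b g hs k)/(t k) + 1 := by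
        have : n = (n - b g hs k) + b g hs k := by omega
        calc n/(t k) = ((n - b g hs k) + b g hs k)/(t k) := by rw [← this]
          _ ≤ (n - b g hs k)/(t k) + (b g hs k)/(t k) + 1 := div_add_le _ _ _ (t_pos k)
      omega
    have h3 : 2^((b g hs k)/(t k) + 1) ≤ U g hs k := by
      calc 2^((b g hs k)/(t k) + 1) ≤ 2^((b g hs k)/(t k) + 2) :=
            Nat.pow_le_pow_right (by norm_num) (by omega)
        _ ≤ U g hs k := U_big g hs k
    calc gbar g n ≤ 2^(n/(2*(t k))) := h1
      _ ≤ 2^((n - b g hs k)/(t k) + ((b g hs k)/(t k) + 1)) :=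
          Nat.pow_le_pow_right (by norm_num) h2
      _ = 2^((b g hs k)/(t k) + 1) * 2^((n - b g hs k)/(t k)) := by
          rw [← pow_add]; ring_nf
      _ ≤ (U g hs k) * 2^((n - b g hs k)/(t k)) :=
          Nat.mul_le_mul_right _ h3
      _ = h g hs k n := rfl

lemma inv2 (i n : ℕ) (hn : a g hs (i+2) ≤ n) : h g hs (i+1) n ≤ h g hs i n := by
  have hc4 : 4*(t (i+2))*((U g hs (i+1))+1) ≤ a g hs (i+2) := aA4 g hs (i+1)
  have hc4' : 4*(t i)*((U g hs (i+1))+1) ≤ n := by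
    have := t_mono (show i ≤ i+2 by omega)
    have h0 : 4*(t i)*((U g hs (i+1))+1) ≤ 4*(t (i+2))*((U g hs (i+1))+1) := by
      apply Nat.mul_le_mul_right; omega
    omega
  have hbi : 2*(b g hs i) ≤ n := by
    have h1 : b g hs i ≤ b g hs (i+1) := b_le_b_succ g hs i
    have h2 : 2*(b g hs (i+1)) ≤ a g hs (i+2) := two_b_le_a_succ g hs (i+1)
    omega
  -- key exponent inequality
  have hkey : U g hs (i+1) + n/(t (i+1)) ≤ (n - b g hs i)/(t i) := by
    have e1 : n/(2*(t i)) ≤ (n - b g hs i)/(t i) := by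
      calc n/(2*(t i)) = n/2/(t i) := by rw [Nat.div_div_eq_div_mul]
        _ ≤ (n - b g hs i)/(t i) := Nat.div_le_div_right (by omega)
    have e2 : n/(4*(t i)) + n/(4*(t i)) ≤ n/(2*(t i)) := by
      calc n/(4*(t i)) + n/(4*(t i)) ≤ (n+n)/(4*(t i)) := Nat.add_div_le_add_div _ _ _
        _ = (2*n)/(2*(2*(t i))) := by ring_nf
        _ = n/(2*(t i)) := Nat.mul_div_mul_left _ _ (by norm_num)
    have e3 : U g hs (i+1) + 1 ≤ n/(4*(t i)) := by
      rw [Nat.le_div_iff_mul_le (by nlinarith [t_pos i] : 0 < 4*(t i))]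
      calc ((U g hs (i+1))+1)*(4*(t i)) = 4*(t i)*((U g hs (i+1))+1) := by ring
        _ ≤ n := hc4'
    have e4 : n/(t (i+1)) ≤ n/(4*(t i)) := by
      apply Nat.div_le_div_left
      · rw [t_succ]; nlinarith [t_pos i]
      · nlinarith [t_pos i]
    omega
  calc h g hs (i+1) n = (U g hs (i+1)) * 2^((n - b g hs (i+1))/(t (i+1))) := rfl
    _ ≤ 2^(U g hs (i+1)) * 2^(n/(t (i+1))) := by
        apply Nat.mul_le_mul
        · exact le_of_lt Nat.lt_two_pow_self
        · exact Nat.pow_le_pow_right (by norm_num)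
            (Nat.div_le_div_right (Nat.sub_le n _))
    _ = 2^(U g hs (i+1) + n/(t (i+1))) := by rw [pow_add]
    _ ≤ 2^((n - b g hs i)/(t i)) := Nat.pow_le_pow_right (by norm_num) hkey
    _ ≤ (U g hs i) * 2^((n - b g hs i)/(t i)) := by
        nlinarith [U_four g hs i, Nat.one_le_two_pow (n := (n - b g hs i)/(t i))]

lemma chain (i : ℕ) : ∀ j, j ≤ i → ∀ y, a g hs (i+1) ≤ y → h g hs i y ≤ h g hs j y := by
  induction i with
  | zero => intro j hj y _; interval_cases j; exact le_refl _
  | succ i ih =>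
    intro j hj y hy
    rcases Nat.eq_or_lt_of_le hj with he | hlt
    · subst he; exact le_refl _
    · have hj' : j ≤ i := by omega
      have h1 : h g hs (i+1) y ≤ h g hs i y := inv2 g hs i y hy
      have h2 : a g hs (i+1) ≤ y := le_trans (a_le_a_succ g hs (i+1)) hy
      exact le_trans h1 (ih j hj' y h2)

lemma flat_lb (k n : ℕ) (hn : a g hs k ≤ n) : ∀ j, U g hs k ≤ h g hs j n := by
  intro j
  rcases le_or_gt k j with hc | hc
  · exact le_trans (U_mono g hs hc) (U_le_h g hs j n)
  · rcases k with _ | k'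
    · omega
    · have e1 : U g hs (k'+1) = h g hs k' (a g hs (k'+1)) := U_succ_eq g hs k'
      calc U g hs (k'+1) = h g hs k' (a g hs (k'+1)) := e1
        _ ≤ h g hs k' n := h_mono g hs k' hn
        _ ≤ h g hs j n := chain g hs k' j (by omega) n hn

lemma flat_m (k n : ℕ) (h1 : a g hs k ≤ n) (h2 : n ≤ b g hs k) : m g hs n = U g hs k := by
  apply le_antisymm
  · calc m g hs n ≤ h g hs k n := m_le g hs k n
      _ = U g hs k := h_flat g hs k n h2
  · exact le_m g hs n _ (flat_lb g hs k n h1)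

lemma climb (k : ℕ) :
    (U g hs k) * 2^((b g hs k)/(t k)) ≤ m g hs (2*(b g hs k)) := by
  apply le_m
  intro j
  rcases lt_trichotomy j k with hc | hc | hc
  · -- j < k
    have hja : a g hs (j+1) ≤ a g hs k := a_mono g hs (by omega)
    have hbj : 2*(b g hs j) ≤ a g hs k := le_trans (two_b_le_a_succ g hs j) hja
    have hab : a g hs k ≤ b g hs k := a_le_b g hs k
    have hsub : (a g hs k - b g hs j) + b g hs k ≤ 2*(b g hs k) - b g hs j := by omega
    have hdiv : (a g hs k - b g hs j)/(t j) + (b g hs k)/(t k)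
        ≤ (2*(b g hs k) - b g hs j)/(t j) := by
      have d1 : (b g hs k)/(t k) ≤ (b g hs k)/(t j) :=
        Nat.div_le_div_left (t_mono (le_of_lt hc)) (t_pos j)
      have d2 : (a g hs k - b g hs j)/(t j) + (b g hs k)/(t j)
          ≤ ((a g hs k - b g hs j) + b g hs k)/(t j) := Nat.add_div_le_add_div _ _ _
      have d3 : ((a g hs k - b g hs j) + b g hs k)/(t j) ≤ (2*(b g hs k) - b g hs j)/(t j) :=
        Nat.div_le_div_right hsub
      omega
    calc (U g hs k) * 2^((b g hs k)/(t k))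
        ≤ h g hs j (a g hs k) * 2^((b g hs k)/(t k)) := by
          apply Nat.mul_le_mul_right
          exact flat_lb g hs k (a g hs k) (le_refl _) j
      _ = (U g hs j) * (2^((a g hs k - b g hs j)/(t j)) * 2^((b g hs k)/(t k))) := by
          unfold h; ring
      _ = (U g hs j) * 2^((a g hs k - b g hs j)/(t j) + (b g hs k)/(t k)) := by
          rw [pow_add]
      _ ≤ (U g hs j) * 2^((2*(b g hs k) - b g hs j)/(t j)) := by
          apply Nat.mul_le_mul_left
          exact Nat.pow_le_pow_right (by norm_num) hdiv
      _ = h g hs j (2*(b g hs k)) := rfl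
  · -- j = k
    subst hc
    have e : 2*(b g hs j) - b g hs j = b g hs j := by omega
    have : h g hs j (2*(b g hs j)) = (U g hs j) * 2^((b g hs j)/(t j)) := by
      unfold h; rw [e]
    rw [this]
  · -- k < j
    have h1 : U g hs (k+1) ≤ U g hs j := U_mono g hs hc
    have h2 : h g hs k (2*(b g hs k)) ≤ h g hs k (a g hs (k+1)) :=
      h_mono g hs k (two_b_le_a_succ g hs k)
    have e : 2*(b g hs k) - b g hs k = b g hs k := by omega
    have h3 : h g hs k (2*(b g hs k)) = (U g hs k) * 2^((b g hs k)/(t k)) := by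
      unfold h; rw [e]
    calc (U g hs k) * 2^((b g hs k)/(t k)) = h g hs k (2*(b g hs k)) := h3.symm
      _ ≤ h g hs k (a g hs (k+1)) := h2
      _ = U g hs (k+1) := (U_succ_eq g hs k).symm
      _ ≤ U g hs j := h1
      _ ≤ h g hs j _ := U_le_h g hs j _

/-! ### submultiplicativity and monotonicity of `f` -/

lemma one_le_m (n : ℕ) : 1 ≤ m g hs n := by
  apply le_m
  intro k
  exact le_trans (by have := U_four g hs k; omega) (U_le_h g hs k n)

lemma core_submult (p q j l : ℕ) (hjl : t l ≤ t j) :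
    h g hs j (p+q) ≤ h g hs j p * h g hs l q := by
  have e1 : (p+q) - b g hs j ≤ (p - b g hs j) + q := by omega
  have e2 : ((p - b g hs j) + q)/(t j) ≤ (p - b g hs j)/(t j) + q/(t j) + 1 :=
    div_add_le _ _ _ (t_pos j)
  have e3 : q/(t j) ≤ q/(t l) := Nat.div_le_div_left hjl (t_pos l)
  have e4 : q/(t l) ≤ (q - b g hs l)/(t l) + (b g hs l)/(t l) + 1 := by
    calc q/(t l) ≤ ((q - b g hs l) + b g hs l)/(t l) :=
          Nat.div_le_div_right (by omega)
      _ ≤ (q - b g hs l)/(t l) + (b g hs l)/(t l) + 1 := div_add_le _ _ _ (t_pos l)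
  have hexp : ((p+q) - b g hs j)/(t j)
      ≤ (p - b g hs j)/(t j) + ((q - b g hs l)/(t l) + ((b g hs l)/(t l) + 2)) := by
    have := Nat.div_le_div_right (c := t j) e1
    omega
  have hU : 2^((b g hs l)/(t l) + 2) ≤ U g hs l := U_big g hs l
  calc h g hs j (p+q) = (U g hs j) * 2^(((p+q) - b g hs j)/(t j)) := rfl
    _ ≤ (U g hs j) * 2^((p - b g hs j)/(t j) + ((q - b g hs l)/(t l) + ((b g hs l)/(t l) + 2))) := by
        apply Nat.mul_le_mul_left
        exact Nat.pow_le_pow_right (by norm_num) hexp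
    _ = ((U g hs j) * 2^((p - b g hs j)/(t j))) *
        (2^((b g hs l)/(t l) + 2) * 2^((q - b g hs l)/(t l))) := by
        rw [pow_add, pow_add]; ring
    _ ≤ ((U g hs j) * 2^((p - b g hs j)/(t j))) *
        ((U g hs l) * 2^((q - b g hs l)/(t l))) := by
        apply Nat.mul_le_mul_left
        exact Nat.mul_le_mul_right _ hU
    _ = h g hs j p * h g hs l q := rfl

lemma m_submult (p q : ℕ) : m g hs (p+q) ≤ m g hs p * m g hs q := by
  obtain ⟨j, hj⟩ := m_attained g hs p
  obtain ⟨l, hl⟩ := m_attained g hs q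
  rcases le_total (t l) (t j) with hc | hc
  · calc m g hs (p+q) ≤ h g hs j (p+q) := m_le g hs j (p+q)
      _ ≤ h g hs j p * h g hs l q := core_submult g hs p q j l hc
      _ = m g hs p * m g hs q := by rw [hj, hl]
  · calc m g hs (p+q) = m g hs (q+p) := by rw [Nat.add_comm]
      _ ≤ h g hs l (q+p) := m_le g hs l (q+p)
      _ ≤ h g hs l q * h g hs j p := core_submult g hs q p l j hc
      _ = m g hs q * m g hs p := by rw [hj, hl]
      _ = m g hs p * m g hs q := by ring

lemma f_submult (p q : ℕ) (hp : 1 ≤ p) (hq : 1 ≤ q) :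
    f g hs (p+q) ≤ f g hs p * f g hs q := by
  have h1 := m_submult g hs p q
  have h2 := one_le_m g hs p
  have h3 := one_le_m g hs q
  unfold f
  nlinarith

lemma f_strictMono : StrictMono (f g hs) := by
  apply strictMono_nat_of_lt_succ
  intro n
  have h1 : m g hs n ≤ m g hs (n+1) := m_mono g hs (by omega)
  show f g hs n < f g hs (n+1)
  unfold f
  omega

lemma f_dom (n : ℕ) : g n ≤ f g hs n := by
  have h1 : gbar g n ≤ m g hs n := le_m g hs n _ (fun k => piece_dom g hs k n)
  have h2 := le_gbar g n
  unfold f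
  omega

lemma flat_f (k n : ℕ) (h1 : a g hs k ≤ n) (h2 : n ≤ b g hs k) :
    f g hs n = n + U g hs k := by
  unfold f
  rw [flat_m g hs k n h1 h2]

/-! ### the defeating argument -/

set_option maxHeartbeats 1000000 in
lemma defeat (γ : ℕ → ℕ) (hmono : Monotone γ)
    (hcond : ∀ d n mm : ℕ, n ≤ mm → mm ≤ d*n → γ mm - γ (mm-1) ≤ (γ n - γ (n-1))^d)
    (C D : ℕ) (hC : 1 ≤ C) (hD : 1 ≤ D)
    (H : ∀ n, 1 ≤ n → γ n ≤ f g hs (C*n) ∧ f g hs (C*n) ≤ γ (D*n)) : False := by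
  obtain ⟨k, hkdef⟩ : ∃ k, k = 4*C*D + C + D := ⟨_, rfl⟩
  have hCD : 1 ≤ C*D := by nlinarith
  have hk1 : 1 ≤ k := by rw [hkdef]; nlinarith
  have hCk : C ≤ k := by rw [hkdef]; nlinarith
  have hDk : D ≤ k := by rw [hkdef]; nlinarith
  have h2CD : 2*(C*D) ≤ k + 1 := by rw [hkdef]; nlinarith
  have hak : 1 ≤ a g hs k := a_pos g hs k
  have hab : a g hs k ≤ b g hs k := a_le_b g hs k
  have hbk : b g hs k = (k+1)*(a g hs k) := rfl
  -- value of f on C * (window points)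
  have hfCa : f g hs (C*(a g hs k)) = C*(a g hs k) + U g hs k := by
    apply flat_f
    · exact Nat.le_mul_of_pos_left _ (by omega)
    · rw [hbk]; exact Nat.mul_le_mul_right _ (by omega)
  have hγA : C*(a g hs k) + U g hs k ≤ γ (D*(a g hs k)) := by
    rw [← hfCa]; exact (H (a g hs k) hak).2
  have hup : ∀ n, D*(a g hs k) ≤ n → n ≤ 2*(D*(a g hs k)) → γ n ≤ C*n + U g hs k := by
    intro n hn1 hn2
    have hn0 : 1 ≤ n := by nlinarith
    have hfl : f g hs (C*n) = C*n + U g hs k := by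
      apply flat_f
      · calc a g hs k ≤ D*(a g hs k) := Nat.le_mul_of_pos_left _ (by omega)
          _ ≤ n := hn1
          _ ≤ C*n := Nat.le_mul_of_pos_left _ (by omega)
      · rw [hbk]
        calc C*n ≤ C*(2*(D*(a g hs k))) := Nat.mul_le_mul_left _ hn2
          _ = (2*(C*D))*(a g hs k) := by ring
          _ ≤ (k+1)*(a g hs k) := Nat.mul_le_mul_right _ h2CD
    rw [← hfl]; exact (H n hn0).1
  have hA1 : 1 ≤ D*(a g hs k) := by nlinarith
  -- pigeonhole: some small increment inside the flat window
  have pigeon : ∃ n₀, D*(a g hs k) < n₀ ∧ n₀ ≤ 2*(D*(a g hs k)) ∧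
      γ n₀ - γ (n₀ - 1) ≤ 2*C := by
    by_contra hcon
    push_neg at hcon
    have hstep : ∀ i, i ≤ D*(a g hs k) →
        γ (D*(a g hs k)) + i*(2*C+1) ≤ γ (D*(a g hs k) + i) := by
      intro i hi
      induction i with
      | zero => simp
      | succ n ih =>
        have h1 := ih (by omega)
        have h2 : 2*C < γ (D*(a g hs k)+n+1) - γ (D*(a g hs k)+n+1-1) :=
          hcon (D*(a g hs k)+n+1) (by omega) (by omega)
        have h3 : γ (D*(a g hs k)+n) ≤ γ (D*(a g hs k)+n+1) := hmono (by omega)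
        have e : D*(a g hs k)+n+1-1 = D*(a g hs k)+n := by omega
        rw [e] at h2
        have e2 : (n+1)*(2*C+1) = n*(2*C+1) + (2*C+1) := by ring
        have e3 : D*(a g hs k) + (n+1) = D*(a g hs k)+n+1 := by omega
        rw [e2, e3]
        omega
    have hA2 := hstep (D*(a g hs k)) (le_refl _)
    have hγ2A := hup (2*(D*(a g hs k))) (by omega) (le_refl _)
    have e0 : D*(a g hs k) + D*(a g hs k) = 2*(D*(a g hs k)) := by ring
    rw [e0] at hA2
    have e1 : (D*(a g hs k))*(2*C+1) = C*(2*(D*(a g hs k))) + D*(a g hs k) := by ring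
    rw [e1] at hA2
    have h1 : 1 ≤ C*(a g hs k) := by nlinarith
    omega
  obtain ⟨n₀, hn₀1, hn₀2, hn₀3⟩ := pigeon
  have hn₀pos : 1 ≤ n₀ := by omega
  have hγn₀ : γ n₀ ≤ C*n₀ + U g hs k := hup n₀ (le_of_lt hn₀1) hn₀2
  -- recovery bound on all later increments
  have recover : ∀ mm, n₀ ≤ mm → γ mm - γ (mm-1) ≤ (2*C)^((mm-1)/n₀ + 1) := by
    intro mm hmm
    have hd : mm ≤ ((mm-1)/n₀ + 1)*n₀ := by
      have h1 : mm - 1 < n₀*((mm-1)/n₀) + n₀ := by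
        have := Nat.mod_lt (mm-1) (show 0 < n₀ by omega)
        have := Nat.div_add_mod (mm-1) n₀
        omega
      have e : ((mm-1)/n₀+1)*n₀ = n₀*((mm-1)/n₀) + n₀ := by ring
      omega
    have h2 := hcond ((mm-1)/n₀ + 1) n₀ mm hmm hd
    exact le_trans h2 (Nat.pow_le_pow_left hn₀3 _)
  -- the contradiction point
  obtain ⟨ns, hnsdef⟩ : ∃ ns, ns = 2*(b g hs k)/C + 1 := ⟨_, rfl⟩
  have hns1 : 1 ≤ ns := by rw [hnsdef]; exact Nat.le_add_left 1 _
  have hCns : 2*(b g hs k) < C*ns := by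
    have h1 := Nat.div_add_mod (2*(b g hs k)) C
    have h2 := Nat.mod_lt (2*(b g hs k)) (show 0 < C by omega)
    have e : C*ns = C*(2*(b g hs k)/C) + C := by rw [hnsdef]; ring
    omega
  have hnsub : ns ≤ 2*(b g hs k) + 1 := by
    have h1 : 2*(b g hs k)/C ≤ 2*(b g hs k) := Nat.div_le_self _ _
    rw [hnsdef]
    exact Nat.add_le_add_right h1 1
  have hnsax : 2*(a g hs k) + 1 ≤ ns := by
    have h1 : 2*(a g hs k) ≤ 2*(b g hs k)/C := by
      rw [Nat.le_div_iff_mul_le (show 0 < C by omega), hbk]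
      nlinarith
    rw [hnsdef]
    exact Nat.add_le_add_right h1 1
  clear hnsdef
  have hn₀M : n₀ ≤ D*ns := by
    have h2 : D*(2*(a g hs k)+1) ≤ D*ns := Nat.mul_le_mul_left _ hnsax
    have e : D*(2*(a g hs k)+1) = 2*(D*(a g hs k)) + D := by ring
    omega
  -- growth bound up to D*ns
  have growth : ∀ i, n₀ + i ≤ D*ns →
      γ (n₀+i) ≤ γ n₀ + i*(2*C)^((D*ns-1)/n₀ + 1) := by
    intro i hi
    induction i with
    | zero => simp
    | succ n ih =>
      have h1 := ih (by omega)
      have h2 := recover (n₀+n+1) (by omega)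
      have e4 : n₀+n+1-1 = n₀+n := by omega
      rw [e4] at h2
      have h3 : (2*C)^((n₀+n)/n₀ + 1) ≤ (2*C)^((D*ns-1)/n₀ + 1) := by
        apply Nat.pow_le_pow_right (by omega)
        have h5 : (n₀+n)/n₀ ≤ (D*ns-1)/n₀ := Nat.div_le_div_right (by omega)
        omega
      have h4 : γ (n₀+n) ≤ γ (n₀+n+1) := hmono (by omega)
      have e2 : (n+1)*(2*C)^((D*ns-1)/n₀ + 1)
          = n*(2*C)^((D*ns-1)/n₀ + 1) + (2*C)^((D*ns-1)/n₀ + 1) := by ring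
      have e3 : n₀ + (n+1) = n₀+n+1 := by omega
      rw [e3, e2]
      omega
  have hγM : γ (D*ns) ≤ γ n₀ + (D*ns - n₀)*(2*C)^((D*ns-1)/n₀ + 1) := by
    have := growth (D*ns - n₀) (by omega)
    have e : n₀ + (D*ns - n₀) = D*ns := by omega
    rwa [e] at this
  -- bound the exponent
  have hdstar : (D*ns-1)/n₀ + 1 ≤ 3*k+4 := by
    have h1 : (D*ns-1)/n₀ < 3*k+4 := by
      rw [Nat.div_lt_iff_lt_mul (show 0 < n₀ by omega)]
      have h2 : D*ns ≤ D*(2*(b g hs k)+1) := Nat.mul_le_mul_left _ hnsub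
      have e2 : D*(2*(b g hs k)+1) = 2*((k+1)*(D*(a g hs k))) + D := by rw [hbk]; ring
      have h3 : D*(a g hs k) + 1 ≤ n₀ := by omega
      have h4 : (3*k+4)*(D*(a g hs k)+1) ≤ (3*k+4)*n₀ := Nat.mul_le_mul_left _ h3
      have e3 : (3*k+4)*(D*(a g hs k)+1) = (3*k+4)*(D*(a g hs k)) + (3*k+4) := by ring
      have e4 : 2*((k+1)*(D*(a g hs k))) = (2*k+2)*(D*(a g hs k)) := by ring
      have h5 : (2*k+2)*(D*(a g hs k)) + D ≤ (3*k+4)*(D*(a g hs k)) + (3*k+3) := by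
        have : (2*k+2)*(D*(a g hs k)) ≤ (3*k+4)*(D*(a g hs k)) :=
          Nat.mul_le_mul_right _ (by omega)
        omega
      omega
    omega
  -- numeric bound : γ (D*ns) ≤ U k + (2k+2)^(3k+9) * a k
  have hpow1 : (2*C)^((D*ns-1)/n₀ + 1) ≤ (2*k+2)^(3*k+4) := by
    calc (2*C)^((D*ns-1)/n₀ + 1) ≤ (2*C)^(3*k+4) :=
          Nat.pow_le_pow_right (by omega) hdstar
      _ ≤ (2*k+2)^(3*k+4) := Nat.pow_le_pow_left (by omega) _
  have hMle : D*ns ≤ 3*((k+1)*((2*k+2)*(a g hs k))) := by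
    have h2 : D*ns ≤ D*(2*(b g hs k)+1) := Nat.mul_le_mul_left _ hnsub
    have e2 : D*(2*(b g hs k)+1) = 2*((k+1)*(D*(a g hs k))) + D := by rw [hbk]; ring
    have h3 : D*(a g hs k) ≤ k*(a g hs k) := Nat.mul_le_mul_right _ hDk
    have h4 : 2*((k+1)*(D*(a g hs k))) ≤ 2*((k+1)*(k*(a g hs k))) := by
      apply Nat.mul_le_mul_left
      exact Nat.mul_le_mul_left _ h3
    have h5 : D ≤ (k+1)*((2*k+2)*(a g hs k)) := by nlinarith
    have h6 : 2*((k+1)*(k*(a g hs k))) ≤ 2*((k+1)*((2*k+2)*(a g hs k))) := by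
      apply Nat.mul_le_mul_left
      apply Nat.mul_le_mul_left
      exact Nat.mul_le_mul_right _ (by omega)
    omega
  have hγn₀2 : γ n₀ ≤ (2*k+2)^2*(a g hs k) + U g hs k := by
    have h1 : C*n₀ ≤ C*(2*(D*(a g hs k))) := Nat.mul_le_mul_left _ hn₀2
    have e1 : C*(2*(D*(a g hs k))) = (2*(C*D))*(a g hs k) := by ring
    have h2 : (2*(C*D))*(a g hs k) ≤ (2*k+2)^2*(a g hs k) := by
      apply Nat.mul_le_mul_right
      nlinarith
    omega
  have hbig : γ (D*ns) ≤ U g hs k + (2*k+2)^(3*k+9)*(a g hs k) := by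
    have h1 : (D*ns - n₀)*(2*C)^((D*ns-1)/n₀ + 1)
        ≤ (3*((k+1)*((2*k+2)*(a g hs k))))*(2*k+2)^(3*k+4) :=
      Nat.mul_le_mul (le_trans (Nat.sub_le _ _) hMle) hpow1
    have h2 : (3*((k+1)*((2*k+2)*(a g hs k))))*(2*k+2)^(3*k+4)
        ≤ (2*k+2)^(3*k+7)*(a g hs k) := by
      have e1 : (3*((k+1)*((2*k+2)*(a g hs k))))*(2*k+2)^(3*k+4)
          = (3*(k+1)*(2*k+2)*(2*k+2)^(3*k+4))*(a g hs k) := by ring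
      rw [e1]
      apply Nat.mul_le_mul_right
      have e2 : (2*k+2)^(3*k+7) = ((2*k+2)^3)*(2*k+2)^(3*k+4) := by
        rw [← pow_add]
        congr 1
        omega
      rw [e2]
      apply Nat.mul_le_mul_right
      have e3 : (2*k+2)^3 = ((2*k+2)^2)*(2*k+2) := by ring
      have e5 : 3*(k+1) ≤ (2*k+2)^2 := by nlinarith
      calc 3*(k+1)*(2*k+2) ≤ ((2*k+2)^2)*(2*k+2) := Nat.mul_le_mul_right _ e5
        _ = (2*k+2)^3 := e3.symm
    have h3 : (2*k+2)^2*(a g hs k) + (2*k+2)^(3*k+7)*(a g hs k)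
        ≤ (2*k+2)^(3*k+9)*(a g hs k) := by
      have e1 : (2*k+2)^2 ≤ (2*k+2)^(3*k+7) := Nat.pow_le_pow_right (by omega) (by omega)
      have e2 : (2*k+2)^(3*k+7) + (2*k+2)^(3*k+7) ≤ (2*k+2)^(3*k+9) := by
        have : 2*(2*k+2)^(3*k+7) ≤ (2*k+2)^2*(2*k+2)^(3*k+7) := by
          apply Nat.mul_le_mul_right
          nlinarith
        rw [← pow_add] at this
        have e3 : 2 + (3*k+7) = 3*k+9 := by omega
        rw [e3] at this
        omega
      have := Nat.add_le_add (Nat.mul_le_mul_right (a g hs k) e1)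
        (le_refl ((2*k+2)^(3*k+7)*(a g hs k)))
      have e4 : (2*k+2)^(3*k+7)*(a g hs k) + (2*k+2)^(3*k+7)*(a g hs k)
          = ((2*k+2)^(3*k+7) + (2*k+2)^(3*k+7))*(a g hs k) := by ring
      have e5 : ((2*k+2)^(3*k+7) + (2*k+2)^(3*k+7))*(a g hs k)
          ≤ (2*k+2)^(3*k+9)*(a g hs k) := Nat.mul_le_mul_right _ e2
      omega
    omega
  -- the Q bound from the construction
  obtain ⟨k', hk'⟩ : ∃ k', k = k'+1 := ⟨k-1, by omega⟩
  have hQ : (2*k+2)^(3*k+9)*(a g hs k) + 2 < 2^((a g hs k)/(t k)) := by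
    have h5 := aA5 g hs k'
    have e1 : 2*k'+4 = 2*k+2 := by omega
    have e2 : 3*k'+12 = 3*k+9 := by omega
    rw [e1, e2, ← hk'] at h5
    have e3 : ((2*k+2)^(3*k+9)+2)*(a g hs k)
        = (2*k+2)^(3*k+9)*(a g hs k) + 2*(a g hs k) := by ring
    omega
  have hQ2 : 2^((a g hs k)/(t k)) ≤ 2^((b g hs k)/(t k)) :=
    Nat.pow_le_pow_right (by norm_num) (Nat.div_le_div_right hab)
  -- lower bound for f at the contradiction point
  have hflow : U g hs k * 2^((b g hs k)/(t k)) ≤ f g hs (C*ns) := by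
    calc U g hs k * 2^((b g hs k)/(t k)) ≤ m g hs (2*(b g hs k)) := climb g hs k
      _ ≤ m g hs (C*ns) := m_mono g hs (le_of_lt hCns)
      _ ≤ f g hs (C*ns) := by unfold f; omega
  have hsand := (H ns hns1).2
  -- final numeric contradiction
  have hUk := U_four g hs k
  have hQpos : 1 ≤ 2^((b g hs k)/(t k)) := Nat.one_le_two_pow
  have hfinal : U g hs k + (2^((b g hs k)/(t k)) - 1) ≤ U g hs k * 2^((b g hs k)/(t k)) := by
    obtain ⟨Q, hQd⟩ : ∃ Q, Q = 2^((b g hs k)/(t k)) := ⟨_, rfl⟩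
    rw [← hQd]
    have hQ1 : 1 ≤ Q := by rw [hQd]; exact Nat.one_le_two_pow
    have h1 : Q-1 ≤ U g hs k*(Q-1) := Nat.le_mul_of_pos_left _ (by omega)
    have e : U g hs k*((Q-1)+1) = U g hs k*(Q-1) + U g hs k := by ring
    have e2 : (Q-1)+1 = Q := by omega
    rw [e2] at e
    omega
  omega

/-! ### conclusion -/

theorem main (hg : Filter.Tendsto (fun n : ℕ => Real.logb 2 (g n) / (n : ℝ))
      Filter.atTop (nhds 0)) :
    ∃ f : ℕ → ℕ,
      StrictMonoOn f (Set.Ici 1) ∧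
      (∀ p q : ℕ, 1 ≤ p → 1 ≤ q → f (p + q) ≤ f p * f q) ∧
      (∃ C : ℕ, 0 < C ∧ ∀ n : ℕ, 1 ≤ n → g n ≤ f (C * n)) ∧
      (∀ γ : ℕ → ℕ, Monotone γ →
        (∀ d n m : ℕ, n ≤ m → m ≤ d * n →
          γ m - γ (m - 1) ≤ (γ n - γ (n - 1)) ^ d) →
        ∀ C D : ℕ, 1 ≤ C → 1 ≤ D →
          ¬ (∀ n : ℕ, 1 ≤ n → γ n ≤ f (C * n) ∧ f (C * n) ≤ γ (D * n))) := by
  have hs : Subexp g := subexp_of_tendsto g hg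
  refine ⟨f g hs, ?_, ?_, ⟨1, one_pos, ?_⟩, ?_⟩
  · exact (f_strictMono g hs).strictMonoOn _
  · intro p q hp hq; exact f_submult g hs p q hp hq
  · intro n _; rw [one_mul]; exact f_dom g hs n
  · intro γ hm hc C D hC hD H
    exact defeat g hs γ hm hc C D hC hD H

end

end Stmt17


/-- Main theorem: for every subexponential `g : ℕ → ℕ` there is an increasing,
submultiplicative `f : ℕ → ℕ` with `g ⪯ f` which is not equivalent to any
growth function of a finitely generated algebra.  Growth functions are
abstracted as increasing functions `γ` satisfying the derivative condition
`γ' m ≤ γ' n ^ d` for all `m ∈ {n, …, d n}` and all `d`. -/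
theorem stmt_17 (g : ℕ → ℕ)
    (hg : Filter.Tendsto (fun n : ℕ => Real.logb 2 (g n) / (n : ℝ))
      Filter.atTop (nhds 0)) :
    ∃ f : ℕ → ℕ,
      StrictMonoOn f (Set.Ici 1) ∧
      (∀ p q : ℕ, 1 ≤ p → 1 ≤ q → f (p + q) ≤ f p * f q) ∧
      (∃ C : ℕ, 0 < C ∧ ∀ n : ℕ, 1 ≤ n → g n ≤ f (C * n)) ∧
      (∀ γ : ℕ → ℕ, Monotone γ →
        (∀ d n m : ℕ, n ≤ m → m ≤ d * n →
          γ m - γ (m - 1) ≤ (γ n - γ (n - 1)) ^ d) →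
        ∀ C D : ℕ, 1 ≤ C → 1 ≤ D →
          ¬ (∀ n : ℕ, 1 ≤ n → γ n ≤ f (C * n) ∧ f (C * n) ≤ γ (D * n))) := by
  exact Stmt17.main g hg
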